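/- arXiv:2302.04356 — 2 statements merged into one kernel-verified Lean document; each statement's English description precedes it below -/
import Mathlib

section
/- There exists a constant C > 0 such that for every x ∈ (0,∞) and every 0 < r ≤ x, γ_α((x−r, x+r)) ≤ C r. -/
open MeasureTheory

/-- The Laguerre probability measure `γ_α` on `(0,∞)`. -/
noncomputable def gammaMeasure (α : ℝ) : Measure ℝ :=
  (volume.restrict (Set.Ioi (0 : ℝ))).withDensity
    fun x => ENNReal.ofReal (2 / Real.Gamma (α + 1) * Real.exp (-x ^ 2) * x ^ (2 * α + 1))

theorem gammaMeasure_linear_growth (α : ℝ) (hα : -1/2 < α) :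
    ∃ C : ℝ, 0 < C ∧ ∀ x r : ℝ, 0 < r → r ≤ x →
      gammaMeasure α (Set.Ioo (x - r) (x + r)) ≤ ENNReal.ofReal (C * r) := by
  have hΓ : 0 < Real.Gamma (α + 1) := Real.Gamma_pos_of_pos (by linarith)
  have hc : 0 < 2 / Real.Gamma (α + 1) := by positivity
  have hβ : 0 < 2 * α + 1 := by linarith
  set c := 2 / Real.Gamma (α + 1) with hcdef
  set β := 2 * α + 1 with hβdef
  set M := c * Real.exp (β ^ 2 / 4) with hMdef
  have hM : 0 < M := by positivity
  refine ⟨2 * M, by positivity, fun x r hr hrx => ?_⟩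
  have hbound : ∀ t ∈ Set.Ioi (0:ℝ),
      ENNReal.ofReal (c * Real.exp (-t ^ 2) * t ^ β) ≤ ENNReal.ofReal M := by
    intro t ht
    apply ENNReal.ofReal_le_ofReal
    have ht0 : (0:ℝ) < t := ht
    have h1 : t ^ β ≤ Real.exp (β * t) := by
      rw [Real.rpow_def_of_pos ht0]
      apply Real.exp_le_exp.2
      nlinarith [Real.log_le_sub_one_of_pos ht0]
    calc c * Real.exp (-t ^ 2) * t ^ β
        ≤ c * Real.exp (-t ^ 2) * Real.exp (β * t) :=
          mul_le_mul_of_nonneg_left h1 (by positivity)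
      _ = c * Real.exp (β * t - t ^ 2) := by
          rw [mul_assoc, ← Real.exp_add]; ring_nf
      _ ≤ M := by
          rw [hMdef]
          apply mul_le_mul_of_nonneg_left _ hc.le
          exact Real.exp_le_exp.2 (by nlinarith [sq_nonneg (t - β / 2)])
  rw [gammaMeasure, withDensity_apply _ measurableSet_Ioo,
    Measure.restrict_restrict measurableSet_Ioo]
  calc ∫⁻ t in Set.Ioo (x - r) (x + r) ∩ Set.Ioi 0,
        ENNReal.ofReal (c * Real.exp (-t ^ 2) * t ^ β) ∂volume
      ≤ ∫⁻ _ in Set.Ioo (x - r) (x + r) ∩ Set.Ioi 0, ENNReal.ofReal M ∂volume := by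
        apply setLIntegral_mono' (measurableSet_Ioo.inter measurableSet_Ioi)
        exact fun t ht => hbound t ht.2
    _ = ENNReal.ofReal M * volume (Set.Ioo (x - r) (x + r) ∩ Set.Ioi 0) := by
        simp [mul_comm]
    _ ≤ ENNReal.ofReal M * volume (Set.Ioo (x - r) (x + r)) :=
        mul_le_mul_right (measure_mono Set.inter_subset_left) _
    _ = ENNReal.ofReal M * ENNReal.ofReal (2 * r) := by
        rw [Real.volume_Ioo]; ring_nf
    _ ≤ ENNReal.ofReal (2 * M * r) := by
        rw [← ENNReal.ofReal_mul hM.le]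
        exact ENNReal.ofReal_le_ofReal (le_of_eq (by ring))
end

section
/- Let a > 0 and m(x) = min{1, 1/x}. There exists C > 0 such that for every x ∈ (0,∞) and 0 < r ≤ x with r ≤ a·m(x), one has γ_α(I(x,2r)) ≤ C γ_α((x−r, x+r)), where I(x,s) = (x−s, x+s) ∩ (0,∞). That is, γ_α is doubling on the family of a-admissible intervals. -/
open MeasureTheory

lemma myL1 {q x y : ℝ} (hx : 0 ≤ x) (hxy : x ≤ y) (hq : 1 ≤ q) :
    y ^ q - x ^ q ≤ q * y ^ (q - 1) * (y - x) := by
  rcases eq_or_lt_of_le (hx.trans hxy) with hy | hy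
  · have hx0 : x = 0 := le_antisymm (hxy.trans hy.ge) hx
    simp [← hy, hx0, Real.zero_rpow (by linarith : q ≠ 0)]
  · have ht : 0 ≤ x / y := div_nonneg hx hy.le
    have ht1 : x / y ≤ 1 := div_le_one_of_le₀ hxy hy.le
    have hb : 1 + q * (x / y - 1) ≤ (x / y) ^ q := by
      have := one_add_mul_self_le_rpow_one_add (s := x / y - 1) (by linarith) hq
      simpa using this
    have hxq : x ^ q = (x / y) ^ q * y ^ q := by
      rw [← Real.mul_rpow ht (le_of_lt hy)]
      rw [div_mul_cancel₀ _ hy.ne']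
    have hyq : y ^ q = y ^ (q - 1) * y := by
      rw [← Real.rpow_add_one hy.ne']
      ring_nf
    have hypos : 0 < y ^ (q - 1) := Real.rpow_pos_of_pos hy _
    have hyqpos : 0 < y ^ q := Real.rpow_pos_of_pos hy _
    have : y ^ q - x ^ q ≤ y ^ q * (q * (1 - x / y)) := by
      rw [hxq]
      nlinarith [hb]
    calc y ^ q - x ^ q ≤ y ^ q * (q * (1 - x / y)) := this
      _ = q * y ^ (q - 1) * (y - x) := by
          rw [hyq]; field_simp

lemma myL2 {q x y : ℝ} (hx : 0 < x) (hxy : x ≤ y) (hq : 1 ≤ q) :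
    q * x ^ (q - 1) * (y - x) ≤ y ^ q - x ^ q := by
  have ht : 0 ≤ y / x - 1 := by
    rw [sub_nonneg, le_div_iff₀ hx]; linarith
  have hb : 1 + q * (y / x - 1) ≤ (y / x) ^ q := by
    have := one_add_mul_self_le_rpow_one_add (s := y / x - 1) (by linarith) hq
    simpa using this
  have hyq : y ^ q = (y / x) ^ q * x ^ q := by
    rw [← Real.mul_rpow (div_nonneg (hx.le.trans hxy) hx.le) hx.le, div_mul_cancel₀ _ hx.ne']
  have hxq : x ^ q = x ^ (q - 1) * x := by
    rw [← Real.rpow_add_one hx.ne']; ring_nf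
  have hxpos : 0 < x ^ (q - 1) := Real.rpow_pos_of_pos hx _
  have hxqpos : 0 < x ^ q := Real.rpow_pos_of_pos hx _
  have : x ^ q * (q * (y / x - 1)) ≤ y ^ q - x ^ q := by
    rw [hyq]; nlinarith [hb]
  calc q * x ^ (q - 1) * (y - x) = x ^ q * (q * (y / x - 1)) := by
        rw [hxq]; field_simp
    _ ≤ y ^ q - x ^ q := this

lemma myClaimA {u r q : ℝ} (hu : 0 ≤ u) (hr : 0 < r) (hq : 1 < q) :
    (u + 3*r) ^ q - (max (u - r) 0) ^ q ≤
      (3 ^ (q-1) + 2) * ((u + 2*r) ^ q - u ^ q) := by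
  set m := max (u - r) 0 with hm
  have hm0 : 0 ≤ m := le_max_right _ _
  have hmu : m ≤ u := max_le (by linarith) hu
  have humr : u - m ≤ r := by
    rcases le_total (u - r) 0 with h | h
    · rw [hm, max_eq_right h]; linarith
    · rw [hm, max_eq_left h]; linarith
  have hq1 : (0:ℝ) ≤ q - 1 := by linarith
  have hq0 : (0:ℝ) < q := by linarith
  -- monotonicity facts
  have mono : ∀ {s t : ℝ}, 0 ≤ s → s ≤ t → s ^ q ≤ t ^ q :=
    fun hs hst => Real.rpow_le_rpow hs hst hq0.le
  have mono' : ∀ {s t : ℝ}, 0 ≤ s → s ≤ t → s ^ (q-1) ≤ t ^ (q-1) :=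
    fun hs hst => Real.rpow_le_rpow hs hst hq1
  -- piece 1 : (u+3r)^q - (u+2r)^q ≤ 3^{q-1} * ((u+2r)^q - (u+r)^q)
  have p1a : (u + 3*r) ^ q - (u + 2*r) ^ q ≤ q * (u + 3*r) ^ (q-1) * r := by
    have := myL1 (q := q) (x := u + 2*r) (y := u + 3*r) (by linarith) (by linarith) hq.le
    simpa using this.trans_eq (by ring)
  have h3 : (u + 3*r) ^ (q-1) ≤ 3 ^ (q-1) * (u + r) ^ (q-1) := by
    have h1 : (u + 3*r : ℝ) ≤ 3 * (u + r) := by linarith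
    have := mono' (by linarith : (0:ℝ) ≤ u + 3*r) h1
    rwa [Real.mul_rpow (by norm_num) (by linarith)] at this
  have p1b : q * (u + r) ^ (q-1) * r ≤ (u + 2*r) ^ q - (u + r) ^ q := by
    have := myL2 (q := q) (x := u + r) (y := u + 2*r) (by linarith) (by linarith) hq.le
    calc q * (u + r) ^ (q-1) * r = q * (u + r) ^ (q-1) * (u + 2*r - (u + r)) := by ring
      _ ≤ _ := this
  -- piece 3 : u^q - m^q ≤ (u+2r)^q - (u+r)^q
  have p3a : u ^ q - m ^ q ≤ q * u ^ (q-1) * r := by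
    have h := myL1 (q := q) (x := m) (y := u) hm0 hmu hq.le
    have hup : 0 ≤ q * u ^ (q-1) := by positivity
    nlinarith [h]
  have p3b : q * u ^ (q-1) * r ≤ q * (u + r) ^ (q-1) * r := by
    have h := mono' hu (by linarith : u ≤ u + r)
    have : 0 ≤ q * r := by positivity
    nlinarith
  -- combine
  have hmid : (u + r) ^ q ≥ u ^ q := mono hu (by linarith)
  have h3pos : (0:ℝ) ≤ (3:ℝ) ^ (q-1) := by positivity
  have hqrpos : 0 ≤ q * (u + 3*r) ^ (q-1) * r := by positivity
  nlinarith [p1a, h3, p1b, p3a, p3b, hmid, mul_le_mul_of_nonneg_left p1b h3pos,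
    mul_le_mul_of_nonneg_right (mul_le_mul_of_nonneg_left h3 hq0.le) hr.le]

lemma myPowIoo {p b : ℝ} (a : ℝ) (hp : 0 < p) (ha : 0 ≤ a) (hab : a ≤ b) :
    ∫⁻ t in Set.Ioo a b, ENNReal.ofReal (t ^ p) =
      ENNReal.ofReal ((b ^ (p+1) - a ^ (p+1)) / (p+1)) := by
  have hint : IntegrableOn (fun t : ℝ => t ^ p) (Set.Ioo a b) volume := by
    have h := (intervalIntegral.intervalIntegrable_rpow (μ := volume) (r := p) (a := a) (b := b)
      (Or.inl (by linarith))).def'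
    rw [Set.uIoc_of_le hab] at h
    exact h.mono_set Set.Ioo_subset_Ioc_self
  have hnn : 0 ≤ᵐ[volume.restrict (Set.Ioo a b)] fun t : ℝ => t ^ p := by
    filter_upwards [ae_restrict_mem measurableSet_Ioo] with t ht
    exact Real.rpow_nonneg (ha.trans ht.1.le) _
  rw [← ofReal_integral_eq_lintegral_ofReal hint hnn]
  congr 1
  rw [← integral_Ioc_eq_integral_Ioo, ← intervalIntegral.integral_of_le hab]
  exact integral_rpow (Or.inl (by linarith))

lemma myExpBound {x r a₀ : ℝ} (hr : 0 < r) (hrx : r ≤ x) (ha : 0 < a₀)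
    (hadm : r ≤ a₀ * min 1 x⁻¹) :
    Real.exp (-(max (x - 2*r) 0) ^ 2) ≤
      Real.exp (6*a₀ + 9*a₀^2) * Real.exp (-(x + r) ^ 2) := by
  have hx : 0 < x := hr.trans_le hrx
  have hra : r ≤ a₀ := hadm.trans (by
    calc a₀ * min 1 x⁻¹ ≤ a₀ * 1 := by
          exact mul_le_mul_of_nonneg_left (min_le_left _ _) ha.le
      _ = a₀ := mul_one _)
  have hrxa : r * x ≤ a₀ := by
    have h1 : r ≤ a₀ * x⁻¹ := hadm.trans
      (mul_le_mul_of_nonneg_left (min_le_right _ _) ha.le)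
    calc r * x ≤ (a₀ * x⁻¹) * x := mul_le_mul_of_nonneg_right h1 hx.le
      _ = a₀ := by field_simp
  rw [← Real.exp_add, Real.exp_le_exp]
  rcases le_total (x - 2*r) 0 with h | h
  · rw [max_eq_right h]
    nlinarith [sq_nonneg a₀, sq_nonneg (x + r)]
  · rw [max_eq_left h]
    nlinarith [sq_nonneg a₀]

theorem gammaMeasure_doubling_on_admissible (α a : ℝ) (hα : -1/2 < α) (ha : 0 < a) :
    ∃ C : ℝ, 0 < C ∧ ∀ x r : ℝ, 0 < r → r ≤ x → r ≤ a * min 1 x⁻¹ →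
      gammaMeasure α (Set.Ioo (x - 2*r) (x + 2*r) ∩ Set.Ioi 0) ≤
        ENNReal.ofReal C * gammaMeasure α (Set.Ioo (x - r) (x + r)) := by
  set p : ℝ := 2 * α + 1 with hp_def
  have hp : 0 < p := by simp only [hp_def]; linarith
  set c : ℝ := 2 / Real.Gamma (α + 1) with hc_def
  have hc : 0 < c := div_pos two_pos (Real.Gamma_pos_of_pos (by linarith))
  refine ⟨(3 ^ p + 2) * Real.exp (6*a + 9*a^2), by positivity, ?_⟩
  intro x r hr hrx hadm
  have hx : 0 < x := hr.trans_le hrx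
  have hxr0 : 0 ≤ x - r := by linarith
  set s : ℝ := max (x - 2*r) 0 with hs_def
  have hs0 : 0 ≤ s := le_max_right _ _
  have hsle : s ≤ x + 2*r := max_le (by linarith) (by linarith)
  -- measure rewriting
  have hγ : ∀ S : Set ℝ, MeasurableSet S →
      gammaMeasure α S = ∫⁻ t in S ∩ Set.Ioi 0,
        ENNReal.ofReal (c * Real.exp (-t^2) * t ^ p) := by
    intro S hS
    rw [gammaMeasure, withDensity_apply _ hS, Measure.restrict_restrict hS]
  have hbigset : (Set.Ioo (x - 2*r) (x + 2*r) ∩ Set.Ioi 0) ∩ Set.Ioi 0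
      = Set.Ioo s (x + 2*r) := by
    rw [Set.inter_assoc, Set.inter_self, Set.Ioo_inter_Ioi]
  have hsmallset : Set.Ioo (x - r) (x + r) ∩ Set.Ioi 0 = Set.Ioo (x - r) (x + r) := by
    rw [Set.Ioo_inter_Ioi, max_eq_left hxr0]
  -- upper bound for big interval
  have hub : gammaMeasure α (Set.Ioo (x - 2*r) (x + 2*r) ∩ Set.Ioi 0) ≤
      ENNReal.ofReal (c * Real.exp (-s^2)) *
        ∫⁻ t in Set.Ioo s (x + 2*r), ENNReal.ofReal (t ^ p) := by
    rw [hγ _ (measurableSet_Ioo.inter measurableSet_Ioi), hbigset,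
      ← lintegral_const_mul' _ _ ENNReal.ofReal_ne_top]
    refine setLIntegral_mono' measurableSet_Ioo fun t ht => ?_
    rw [← ENNReal.ofReal_mul (by positivity)]
    apply ENNReal.ofReal_le_ofReal
    have hexp : Real.exp (-t^2) ≤ Real.exp (-s^2) := by
      rw [Real.exp_le_exp]
      nlinarith [ht.1, hs0]
    have htp : 0 ≤ t ^ p := Real.rpow_nonneg (hs0.trans ht.1.le) _
    calc c * Real.exp (-t^2) * t ^ p ≤ c * Real.exp (-s^2) * t ^ p := by
          apply mul_le_mul_of_nonneg_right _ htp
          exact mul_le_mul_of_nonneg_left hexp hc.le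
      _ = c * Real.exp (-s^2) * t ^ p := rfl
  -- lower bound for small interval
  have hlb : ENNReal.ofReal (c * Real.exp (-(x + r)^2)) *
      (∫⁻ t in Set.Ioo (x - r) (x + r), ENNReal.ofReal (t ^ p)) ≤
      gammaMeasure α (Set.Ioo (x - r) (x + r)) := by
    rw [hγ _ measurableSet_Ioo, hsmallset,
      ← lintegral_const_mul' _ _ ENNReal.ofReal_ne_top]
    refine setLIntegral_mono' measurableSet_Ioo fun t ht => ?_
    rw [← ENNReal.ofReal_mul (by positivity)]
    apply ENNReal.ofReal_le_ofReal
    have ht0 : 0 ≤ t := hxr0.trans ht.1.le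
    have hexp : Real.exp (-(x + r)^2) ≤ Real.exp (-t^2) := by
      rw [Real.exp_le_exp]
      nlinarith [ht.2, ht0]
    have htp : 0 ≤ t ^ p := Real.rpow_nonneg ht0 _
    exact mul_le_mul_of_nonneg_right (mul_le_mul_of_nonneg_left hexp hc.le) htp
  -- compute the power integrals
  rw [myPowIoo s hp hs0 hsle] at hub
  rw [myPowIoo (x - r) hp hxr0 (by linarith)] at hlb
  -- key real inequality
  set q : ℝ := p + 1 with hq_def
  have hq1 : 1 < q := by simp only [hq_def]; linarith
  have hq0 : 0 < q := by linarith
  have hclaim : (x + 2*r) ^ q - s ^ q ≤ (3 ^ p + 2) * ((x + r) ^ q - (x - r) ^ q) := by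
    have h := myClaimA (u := x - r) (r := r) (q := q) hxr0 hr hq1
    have e1 : x - r + 3*r = x + 2*r := by ring
    have e2 : x - r + 2*r = x + r := by ring
    have e3 : x - r - r = x - 2*r := by ring
    have e4 : q - 1 = p := by simp only [hq_def]; ring
    rw [e1, e2, e3, e4] at h
    exact h
  have hIbig : 0 ≤ (x + 2*r) ^ q - s ^ q := by
    have := Real.rpow_le_rpow hs0 hsle hq0.le
    linarith
  have hIsmall : 0 ≤ (x + r) ^ q - (x - r) ^ q := by
    have := Real.rpow_le_rpow hxr0 (by linarith : x - r ≤ x + r) hq0.le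
    linarith
  have hexpB := myExpBound hr hrx ha hadm
  rw [← hs_def] at hexpB
  have hkey : c * Real.exp (-s^2) * (((x + 2*r) ^ q - s ^ q) / q) ≤
      ((3 ^ p + 2) * Real.exp (6*a + 9*a^2)) *
        (c * Real.exp (-(x + r)^2) * (((x + r) ^ q - (x - r) ^ q) / q)) := by
    have h3p : (0:ℝ) < 3 ^ p := Real.rpow_pos_of_pos (by norm_num) _
    have hE : (0:ℝ) < Real.exp (6*a + 9*a^2) := Real.exp_pos _
    have hprod : Real.exp (-s^2) * ((x + 2*r) ^ q - s ^ q) ≤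
        (Real.exp (6*a + 9*a^2) * Real.exp (-(x + r)^2)) *
          ((3 ^ p + 2) * ((x + r) ^ q - (x - r) ^ q)) :=
      mul_le_mul hexpB hclaim hIbig (by positivity)
    have h2 := mul_le_mul_of_nonneg_left hprod (by positivity : (0:ℝ) ≤ c / q)
    calc c * Real.exp (-s^2) * (((x + 2*r) ^ q - s ^ q) / q)
        = c / q * (Real.exp (-s^2) * ((x + 2*r) ^ q - s ^ q)) := by ring
      _ ≤ c / q * ((Real.exp (6*a + 9*a^2) * Real.exp (-(x + r)^2)) *
            ((3 ^ p + 2) * ((x + r) ^ q - (x - r) ^ q))) := h2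
      _ = ((3 ^ p + 2) * Real.exp (6*a + 9*a^2)) *
            (c * Real.exp (-(x + r)^2) * (((x + r) ^ q - (x - r) ^ q) / q)) := by
          ring
  -- finish in ENNReal
  calc gammaMeasure α (Set.Ioo (x - 2*r) (x + 2*r) ∩ Set.Ioi 0)
      ≤ ENNReal.ofReal (c * Real.exp (-s^2)) *
          ENNReal.ofReal (((x + 2*r) ^ q - s ^ q) / q) := hub
    _ = ENNReal.ofReal (c * Real.exp (-s^2) * (((x + 2*r) ^ q - s ^ q) / q)) := by
        rw [← ENNReal.ofReal_mul (by positivity)]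
    _ ≤ ENNReal.ofReal (((3 ^ p + 2) * Real.exp (6*a + 9*a^2)) *
          (c * Real.exp (-(x + r)^2) * (((x + r) ^ q - (x - r) ^ q) / q))) :=
        ENNReal.ofReal_le_ofReal hkey
    _ = ENNReal.ofReal ((3 ^ p + 2) * Real.exp (6*a + 9*a^2)) *
          (ENNReal.ofReal (c * Real.exp (-(x + r)^2)) *
            ENNReal.ofReal (((x + r) ^ q - (x - r) ^ q) / q)) := by
        rw [ENNReal.ofReal_mul (by positivity),
          ENNReal.ofReal_mul (by positivity : (0:ℝ) ≤ c * Real.exp (-(x + r)^2))]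
    _ ≤ ENNReal.ofReal ((3 ^ p + 2) * Real.exp (6*a + 9*a^2)) *
          gammaMeasure α (Set.Ioo (x - r) (x + r)) :=
        mul_le_mul_right hlb _
end
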